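/- Herbrand's theorem for prenex existential formulas: Let G be a quantifier-free first-order formula with free variables among x₁,…,x_k, over a language containing at least one constant symbol. Then the formula ∃x₁.…∃x_k.G is valid if and only if there are finitely many k-tuples of variable-free terms (t₁¹,…,t_k¹), …, (t₁ʳ,…,t_kʳ) of the language such that the disjunction ⋁_{j=1}^{r} G{x₁↦t₁ʲ,…,x_k↦t_kʲ} is sententially valid. -/

import Mathlib

namespace Herbrand

abbrev FSym := Option (ℕ ⊕ ℕ)

inductive Tm : Type where
  | var : ℕ → Tm
  | fn : FSym → List Tm → Tm

inductive Fm : Type where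
  | atom : ℕ → List Tm → Fm
  | neg : Fm → Fm
  | or : Fm → Fm → Fm
  | and : Fm → Fm → Fm
  | all : ℕ → Fm → Fm
  | ex : ℕ → Fm → Fm

mutual
  def Tm.beq : Tm → Tm → Bool
    | .var x, .var y => x == y
    | .fn f ts, .fn g us => f == g && Tm.beqList ts us
    | _, _ => false
  def Tm.beqList : List Tm → List Tm → Bool
    | [], [] => true
    | t :: ts, u :: us => Tm.beq t u && Tm.beqList ts us
    | _, _ => false
end

def Tm.height : Tm → ℕ
  | .var _ => 1
  | .fn _ ts => 1 + ts.attach.foldr (fun ⟨t, _⟩ m => max (Tm.height t) m) 0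

def Tm.varsT : Tm → List ℕ
  | .var x => [x]
  | .fn _ ts => ts.attach.foldr (fun ⟨t, _⟩ l => Tm.varsT t ++ l) []

def Tm.symsT : Tm → List (FSym × ℕ)
  | .var _ => []
  | .fn f ts => (f, ts.length) :: ts.attach.foldr (fun ⟨t, _⟩ l => Tm.symsT t ++ l) []

def Tm.substT (x : ℕ) (u : Tm) : Tm → Tm
  | .var y => if y = x then u else .var y
  | .fn f ts => .fn f (ts.attach.map fun ⟨t, _⟩ => Tm.substT x u t)

/-- A term is over the base language: no Skolem symbols, no bullet. -/
def Tm.isBaseT (t : Tm) : Prop := ∀ p ∈ t.symsT, ∃ k : ℕ, p.1 = some (Sum.inl k)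

def Fm.freeVars : Fm → List ℕ
  | .atom _ ts => ts.flatMap Tm.varsT
  | .neg A => A.freeVars
  | .or A B => A.freeVars ++ B.freeVars
  | .and A B => A.freeVars ++ B.freeVars
  | .all x A => A.freeVars.filter (· ≠ x)
  | .ex x A => A.freeVars.filter (· ≠ x)

def Fm.boundVars : Fm → List ℕ
  | .atom _ _ => []
  | .neg A => A.boundVars
  | .or A B => A.boundVars ++ B.boundVars
  | .and A B => A.boundVars ++ B.boundVars
  | .all x A => x :: A.boundVars
  | .ex x A => x :: A.boundVars

def Fm.symsF : Fm → List (FSym × ℕ)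
  | .atom _ ts => ts.flatMap Tm.symsT
  | .neg A => A.symsF
  | .or A B => A.symsF ++ B.symsF
  | .and A B => A.symsF ++ B.symsF
  | .all _ A => A.symsF
  | .ex _ A => A.symsF

/-- Naive substitution of the term `u` for the free occurrences of the variable `x`. -/
def Fm.subst (x : ℕ) (u : Tm) : Fm → Fm
  | .atom p ts => .atom p (ts.map (Tm.substT x u))
  | .neg A => .neg (Fm.subst x u A)
  | .or A B => .or (Fm.subst x u A) (Fm.subst x u B)
  | .and A B => .and (Fm.subst x u A) (Fm.subst x u B)
  | .all y A => if y = x then .all y A else .all y (Fm.subst x u A)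
  | .ex y A => if y = x then .ex y A else .ex y (Fm.subst x u A)

/-- Quantifier-freeness. -/
def Fm.qf : Fm → Prop
  | .atom _ _ => True
  | .neg A => A.qf
  | .or A B => A.qf ∧ B.qf
  | .and A B => A.qf ∧ B.qf
  | .all _ _ => False
  | .ex _ _ => False

def Fm.qfB : Fm → Bool
  | .atom _ _ => true
  | .neg A => A.qfB
  | .or A B => A.qfB && B.qfB
  | .and A B => A.qfB && B.qfB
  | .all _ _ => false
  | .ex _ _ => false

/-- A formula is over the base language. -/
def Fm.isBase (A : Fm) : Prop := ∀ p ∈ A.symsF, ∃ k : ℕ, p.1 = some (Sum.inl k)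

/-- Rectified: distinct binders, and bound variables distinct from free variables
(the tacit assumption of the paper: every occurrence of every variable is either
free or bound by a unique quantifier). -/
def Fm.rectified (A : Fm) : Prop :=
  A.boundVars.Nodup ∧ ∀ x ∈ A.boundVars, x ∉ A.freeVars

/-- Sentential (Boolean) evaluation, reading each atomic formula (a predicate symbol
together with its argument terms) as a propositional variable. -/
def Fm.sentEval (β : ℕ → List Tm → Bool) : Fm → Bool
  | .atom p ts => β p ts
  | .neg A => !(A.sentEval β)
  | .or A B => A.sentEval β || B.sentEval β
  | .and A B => A.sentEval β && B.sentEval β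
  | .all _ _ => false
  | .ex _ _ => false

/-- A sentential tautology: a quantifier-free formula that evaluates to true under
every Boolean valuation of its atoms. -/
def Fm.taut (A : Fm) : Prop := A.qf ∧ ∀ β : ℕ → List Tm → Bool, A.sentEval β = true

/-- An interpretation of the language on a domain `D`. -/
structure Interp (D : Type) where
  fns : FSym → List D → D
  prd : ℕ → List D → Prop

def Tm.eval {D : Type} (I : Interp D) (v : ℕ → D) : Tm → D
  | .var x => v x
  | .fn f ts => I.fns f (ts.attach.map fun ⟨t, _⟩ => Tm.eval I v t)

def Fm.holds {D : Type} (I : Interp D) (v : ℕ → D) : Fm → Prop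
  | .atom p ts => I.prd p (ts.map (Tm.eval I v))
  | .neg A => ¬ Fm.holds I v A
  | .or A B => Fm.holds I v A ∨ Fm.holds I v B
  | .and A B => Fm.holds I v A ∧ Fm.holds I v B
  | .all x A => ∀ d : D, Fm.holds I (Function.update v x d) A
  | .ex x A => ∃ d : D, Fm.holds I (Function.update v x d) A

/-- Validity: truth in every structure (nonempty domain) under every assignment. -/
def Fm.valid (A : Fm) : Prop :=
  ∀ (D : Type) (_ : Nonempty D) (I : Interp D) (v : ℕ → D), A.holds I v


/-- Alpha-equivalence: equality of formulas up to renaming of bound variables. -/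
inductive Alpha : Fm → Fm → Prop where
  | refl (A : Fm) : Alpha A A
  | symm {A B : Fm} : Alpha A B → Alpha B A
  | trans {A B C : Fm} : Alpha A B → Alpha B C → Alpha A C
  | negc {A B : Fm} : Alpha A B → Alpha (.neg A) (.neg B)
  | orc {A A' B B' : Fm} : Alpha A A' → Alpha B B' → Alpha (.or A B) (.or A' B')
  | andc {A A' B B' : Fm} : Alpha A A' → Alpha B B' → Alpha (.and A B) (.and A' B')
  | allc {A B : Fm} (x : ℕ) : Alpha A B → Alpha (.all x A) (.all x B)
  | exc {A B : Fm} (x : ℕ) : Alpha A B → Alpha (.ex x A) (.ex x B)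
  | allRename (x y : ℕ) (A : Fm) : y ∉ A.freeVars → y ∉ A.boundVars →
      Alpha (.all x A) (.all y (Fm.subst x (.var y) A))
  | exRename (x y : ℕ) (A : Fm) : y ∉ A.freeVars → y ∉ A.boundVars →
      Alpha (.ex x A) (.ex y (Fm.subst x (.var y) A))

/-- One-hole contexts `A[…]` in formulas. -/
inductive Ctx : Type where
  | hole : Ctx
  | negC : Ctx → Ctx
  | orL : Ctx → Fm → Ctx
  | orR : Fm → Ctx → Ctx
  | andL : Ctx → Fm → Ctx
  | andR : Fm → Ctx → Ctx
  | allC : ℕ → Ctx → Ctx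
  | exC : ℕ → Ctx → Ctx

def Ctx.fill : Ctx → Fm → Fm
  | .hole, H => H
  | .negC c, H => .neg (c.fill H)
  | .orL c B, H => .or (c.fill H) B
  | .orR B c, H => .or B (c.fill H)
  | .andL c B, H => .and (c.fill H) B
  | .andR B c, H => .and B (c.fill H)
  | .allC x c, H => .all x (c.fill H)
  | .exC x c, H => .ex x (c.fill H)

/-- `true` iff the hole is in the scope of an even number of negation symbols. -/
def Ctx.pol : Ctx → Bool
  | .hole => true
  | .negC c => !c.pol
  | .orL c _ => c.pol
  | .orR _ c => c.pol
  | .andL c _ => c.pol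
  | .andR _ c => c.pol
  | .allC _ c => c.pol
  | .exC _ c => c.pol

/-- The hole is accessible: not in the scope of any quantifier. -/
def Ctx.accessible : Ctx → Prop
  | .hole => True
  | .negC c => c.accessible
  | .orL c _ => c.accessible
  | .orR _ c => c.accessible
  | .andL c _ => c.accessible
  | .andR _ c => c.accessible
  | .allC _ _ => False
  | .exC _ _ => False

/-- Variables occurring free in the context (the hole contributing nothing). -/
def Ctx.freeVarsC : Ctx → List ℕ
  | .hole => []
  | .negC c => c.freeVarsC
  | .orL c B => c.freeVarsC ++ B.freeVars
  | .orR B c => B.freeVars ++ c.freeVarsC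
  | .andL c B => c.freeVarsC ++ B.freeVars
  | .andR B c => B.freeVars ++ c.freeVarsC
  | .allC x c => c.freeVarsC.filter (· ≠ x)
  | .exC x c => c.freeVarsC.filter (· ≠ x)

/-- `mkQ q x H` is `∃x.H` if `q = true`, and `∀x.H` if `q = false`.
A quantifier `mkQ q x` sitting in a context `c` is existentialoid iff `q = c.pol`
(i.e. `∃` under an even number of negations or `∀` under an odd number),
and universaloid iff `q = !c.pol`. -/
def mkQ (q : Bool) (x : ℕ) (H : Fm) : Fm := if q then .ex x H else .all x H

/-- Derivations in the modern version of Herbrand's modus-ponens-free calculus,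
from a start formula, recording the list of instance terms `t` used by the
applications of the generalized rule of γ-quantification. -/
inductive Deriv : Fm → Fm → List Tm → Prop where
  | refl (A : Fm) : Deriv A A []
  | gamma {B : Fm} {ts : List Tm} (c : Ctx) (q : Bool) (x : ℕ) (t : Tm) (H : Fm) :
      Deriv B (c.fill (Fm.subst x t H)) ts →
      c.accessible → q = c.pol → (∀ z ∈ t.varsT, z ∉ H.boundVars) →
      Deriv B (c.fill (mkQ q x H)) (ts ++ [t])
  | delta {B : Fm} {ts : List Tm} (c : Ctx) (q : Bool) (y : ℕ) (H : Fm) :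
      Deriv B (c.fill H) ts →
      c.accessible → q = !c.pol → y ∉ c.freeVarsC →
      Deriv B (c.fill (mkQ q y H)) ts
  | simp {B : Fm} {ts : List Tm} (c : Ctx) (H H' : Fm) :
      Deriv B (c.fill (if c.pol then Fm.or H H' else Fm.and H H')) ts →
      Alpha H H' →
      Deriv B (c.fill H) ts
  | alpha {B A A' : Fm} {ts : List Tm} : Deriv B A ts → Alpha A A' → Deriv B A' ts

/-- A single application of a generalized rule of γ- or δ-quantification. -/
inductive QStep : Fm → Fm → Prop where
  | gamma (c : Ctx) (q : Bool) (x : ℕ) (t : Tm) (H : Fm) :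
      c.accessible → q = c.pol → (∀ z ∈ t.varsT, z ∉ H.boundVars) →
      QStep (c.fill (Fm.subst x t H)) (c.fill (mkQ q x H))
  | delta (c : Ctx) (q : Bool) (y : ℕ) (H : Fm) :
      c.accessible → q = !c.pol → y ∉ c.freeVarsC →
      QStep (c.fill H) (c.fill (mkQ q y H))

/-- A single application of the generalized rule of γ-simplification:
simplification where `H` is of the form `Qy.C` with `Qy.` existentialoid. -/
inductive GSimpStep : Fm → Fm → Prop where
  | mk (c : Ctx) (y : ℕ) (C H' : Fm) :
      Alpha (mkQ c.pol y C) H' →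
      GSimpStep
        (c.fill (if c.pol then Fm.or (mkQ c.pol y C) H' else Fm.and (mkQ c.pol y C) H'))
        (c.fill (mkQ c.pol y C))


/-- The Skolem term `x*(y₁,…,yₘ)` for the removed universaloid variable `x`,
whose arguments are the variables of the existentialoid quantifiers in scope. -/
def skTm (x : ℕ) (γs : List ℕ) : Tm := .fn (some (Sum.inr x)) (γs.map Tm.var)

/-- Outer Skolemization: `b` is the polarity (`true` = an even number of negations
so far), `γs` the list of variables of the existentialoid quantifiers in whose
scope we are, in order. Universaloid quantifiers are removed and their variables
replaced by Skolem terms; existentialoid quantifiers are kept. -/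
def Fm.skolemize (b : Bool) (γs : List ℕ) : Fm → Fm
  | .atom p ts => .atom p ts
  | .neg A => .neg (A.skolemize (!b) γs)
  | .or A B => .or (A.skolemize b γs) (B.skolemize b γs)
  | .and A B => .and (A.skolemize b γs) (B.skolemize b γs)
  | .all x A => if b then Fm.subst x (skTm x γs) (A.skolemize b γs)
                else .all x (A.skolemize b (γs ++ [x]))
  | .ex x A => if b then .ex x (A.skolemize b (γs ++ [x]))
               else Fm.subst x (skTm x γs) (A.skolemize b γs)

/-- The outer Skolemized form of a formula. -/
def Fm.outerSk (A : Fm) : Fm := A.skolemize true []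

def falsum : Fm := .and (.atom 0 []) (.neg (.atom 0 []))
def verum : Fm := .or (.atom 0 []) (.neg (.atom 0 []))

def bigOr : List Fm → Fm
  | [] => falsum
  | [A] => A
  | A :: B :: rest => .or A (bigOr (B :: rest))

def bigAnd : List Fm → Fm
  | [] => verum
  | [A] => A
  | A :: B :: rest => .and A (bigAnd (B :: rest))

/-- All lists of length `k` over the given list. -/
def tuples : ℕ → List Tm → List (List Tm)
  | 0, _ => [[]]
  | k + 1, l => l.flatMap fun a => (tuples k l).map (a :: ·)

/-- The fresh constant `•` is included iff `F` contains neither constants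
nor free variables. -/
def Fm.allowBullet (F : Fm) : Bool :=
  F.freeVars.isEmpty && F.symsF.all (fun p => p.2 != 0)

/-- The champ fini `T_n(F)`: all terms of height `< n` built from the function
symbols (with their arities), constant symbols, and free variables of `F`
(with the fresh constant `•` added if `F` has neither constants nor free
variables).  `T_1(F) = ∅`. -/
def Fm.champTm (F : Fm) : ℕ → List Tm
  | 0 => []
  | 1 => []
  | n + 2 =>
      F.freeVars.map Tm.var
        ++ (if F.allowBullet then [Tm.fn none []] else [])
        ++ F.symsF.flatMap (fun p => (tuples p.2 (F.champTm (n + 1))).map (Tm.fn p.1))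

/-- The expansion `A^T` of `A` w.r.t. a finite set (list) of terms `T`. -/
def Fm.expandL (T : List Tm) : Fm → Fm
  | .atom p ts => .atom p ts
  | .neg A => .neg (A.expandL T)
  | .or A B => .or (A.expandL T) (B.expandL T)
  | .and A B => .and (A.expandL T) (B.expandL T)
  | .ex x A => bigOr (T.map fun t => Fm.subst x t (A.expandL T))
  | .all x A => bigAnd (T.map fun t => Fm.subst x t (A.expandL T))

/-- Property C of order `n` (for `n ≥ 1`): letting `F` be the outer Skolemized
form of `A`, for `n = 1` the formula `F` itself must be a sentential tautology,
and for `n > 1` the expansion `F^{T_n(F)}` must be a sentential tautology. -/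
def Fm.hasC (A : Fm) (n : ℕ) : Prop :=
  (if n = 1 then A.outerSk else Fm.expandL (A.outerSk.champTm n) A.outerSk).taut


/-- Reading every term that starts with a Skolem function symbol as an atomic
variable, via an injective coding `code` of terms into variable names. -/
def Tm.readSk (code : Tm → ℕ) : Tm → Tm
  | .var x => .var x
  | .fn (some (Sum.inr k)) ts => .var (code (.fn (some (Sum.inr k)) ts))
  | .fn (some (Sum.inl k)) ts => .fn (some (Sum.inl k)) (ts.attach.map fun ⟨t, _⟩ => Tm.readSk code t)
  | .fn none ts => .fn none (ts.attach.map fun ⟨t, _⟩ => Tm.readSk code t)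

def Fm.readSk (code : Tm → ℕ) : Fm → Fm
  | .atom p ts => .atom p (ts.map (Tm.readSk code))
  | .neg A => .neg (A.readSk code)
  | .or A B => .or (A.readSk code) (B.readSk code)
  | .and A B => .and (A.readSk code) (B.readSk code)
  | .all x A => .all x (A.readSk code)
  | .ex x A => .ex x (A.readSk code)

/-- The atoms (predicate symbol with argument terms) occurring in a formula. -/
def Fm.atoms : Fm → List (ℕ × List Tm)
  | .atom p ts => [(p, ts)]
  | .neg A => A.atoms
  | .or A B => A.atoms ++ B.atoms
  | .and A B => A.atoms ++ B.atoms
  | .all _ A => A.atoms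
  | .ex _ A => A.atoms

/-- All Boolean valuations of a finite list of atoms (all other atoms `false`). -/
def valuations : List (ℕ × List Tm) → List (ℕ → List Tm → Bool)
  | [] => [fun _ _ => false]
  | a :: rest =>
      (valuations rest).flatMap fun β =>
        [fun p ts => if p == a.1 && Tm.beqList ts a.2 then true else β p ts,
         fun p ts => if p == a.1 && Tm.beqList ts a.2 then false else β p ts]

/-- Computable check for sentential tautology. -/
def Fm.tautB (A : Fm) : Bool :=
  A.qfB && (valuations A.atoms).all fun β => A.sentEval β

/-- Computable check for Property C of order `n`. -/
def Fm.hasCB (A : Fm) (n : ℕ) : Bool :=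
  (if n = 1 then A.outerSk else Fm.expandL (A.outerSk.champTm n) A.outerSk).tautB

/-- The six rules of passage, read from left to right. -/
inductive PassEq : Fm → Fm → Prop where
  | p1 (x : ℕ) (A : Fm) : PassEq (.neg (.all x A)) (.ex x (.neg A))
  | p2 (x : ℕ) (A : Fm) : PassEq (.neg (.ex x A)) (.all x (.neg A))
  | p3 (x : ℕ) (A B : Fm) : x ∉ B.freeVars → PassEq (.or (.all x A) B) (.all x (.or A B))
  | p4 (x : ℕ) (A B : Fm) : x ∉ B.freeVars → PassEq (.or B (.all x A)) (.all x (.or B A))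
  | p5 (x : ℕ) (A B : Fm) : x ∉ B.freeVars → PassEq (.or (.ex x A) B) (.ex x (.or A B))
  | p6 (x : ℕ) (A B : Fm) : x ∉ B.freeVars → PassEq (.or B (.ex x A)) (.ex x (.or B A))

/-- A single inference step of Herbrand's historic modus-ponens-free calculus:
the shallow rules of γ- and δ-quantification (empty context), the generalized
(deep) rule of simplification, the twelve (deep) rules of passage, and renaming
of bound variables. -/
inductive HStep : Fm → Fm → Prop where
  | gammaSh (x : ℕ) (t : Tm) (H : Fm) :
      (∀ z ∈ t.varsT, z ∉ H.boundVars) →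
      HStep (Fm.subst x t H) (.ex x H)
  | deltaSh (y : ℕ) (H : Fm) :
      HStep H (.all y H)
  | simp (c : Ctx) (H H' : Fm) :
      Alpha H H' →
      HStep (c.fill (if c.pol then Fm.or H H' else Fm.and H H')) (c.fill H)
  | passage (c : Ctx) (L R : Fm) : PassEq L R → HStep (c.fill L) (c.fill R)
  | passageRev (c : Ctx) (L R : Fm) : PassEq L R → HStep (c.fill R) (c.fill L)
  | alpha (A B : Fm) : Alpha A B → HStep A B


/-- `∃x₁.…∃x_k.G`. -/
def bigEx : List ℕ → Fm → Fm
  | [], G => G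
  | x :: xs, G => .ex x (bigEx xs G)

/-- Substitution of the terms `ts` for the (distinct) variables `xs`; for
variable-free terms this is the parallel substitution `G{x₁↦t₁,…,x_k↦t_k}`. -/
def Fm.substList : List ℕ → List Tm → Fm → Fm
  | [], _, G => G
  | _, [], G => G
  | x :: xs, t :: ts, G => Fm.substList xs ts (Fm.subst x t G)

/-! ### Auxiliary lemmas -/

section Aux

theorem Tm.indOn {P : Tm → Prop} (hv : ∀ x, P (.var x))
    (hf : ∀ f ts, (∀ t ∈ ts, P t) → P (.fn f ts)) : ∀ t, P t := fun t =>
  Tm.rec (motive_1 := P) (motive_2 := fun l => ∀ t ∈ l, P t) hv hf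
    (by simp) (fun {head tail} h hs t ht => by
      rcases List.mem_cons.mp ht with h1 | h2
      · exact h1 ▸ h
      · exact hs t h2) t

theorem foldr_attach_append {α : Type} (g : Tm → List α) (l : List Tm) :
    l.attach.foldr (fun x acc => g x.1 ++ acc) [] = l.flatMap g := by
  induction l with
  | nil => simp
  | cons t ts ih =>
      simp only [List.attach_cons, List.foldr_cons, List.foldr_map]
      rw [ih, List.flatMap_cons]

theorem Tm.varsT_fn (f : FSym) (ts : List Tm) :
    (Tm.fn f ts).varsT = ts.flatMap Tm.varsT := by
  rw [Tm.varsT]; exact foldr_attach_append _ _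

theorem Tm.symsT_fn (f : FSym) (ts : List Tm) :
    (Tm.fn f ts).symsT = (f, ts.length) :: ts.flatMap Tm.symsT := by
  rw [Tm.symsT]; rw [foldr_attach_append]

theorem Tm.substT_fn (x : ℕ) (u : Tm) (f : FSym) (ts : List Tm) :
    Tm.substT x u (.fn f ts) = .fn f (ts.map (Tm.substT x u)) := by
  rw [Tm.substT]
  simp [List.map_subtype, List.unattach_attach]

theorem Tm.eval_fn {D : Type} (I : Interp D) (v : ℕ → D) (f : FSym) (ts : List Tm) :
    Tm.eval I v (.fn f ts) = I.fns f (ts.map (Tm.eval I v)) := by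
  rw [Tm.eval]
  simp [List.map_subtype, List.unattach_attach]

theorem Tm.eval_substT {D : Type} (I : Interp D) (x : ℕ) (u : Tm) :
    ∀ t : Tm, ∀ v : ℕ → D,
      Tm.eval I v (Tm.substT x u t) = Tm.eval I (Function.update v x (Tm.eval I v u)) t := by
  intro t
  induction t using Tm.indOn with
  | hv y =>
      intro v
      rw [Tm.substT]
      by_cases h : y = x <;> simp [h, Tm.eval, Function.update]
  | hf f ts ih =>
      intro v
      rw [Tm.substT_fn, Tm.eval_fn, Tm.eval_fn, List.map_map]
      congr 1
      exact List.map_congr_left fun t ht => ih t ht v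

theorem Tm.eval_indep {D : Type} (I : Interp D) :
    ∀ t : Tm, ∀ v w : ℕ → D, (∀ z ∈ t.varsT, v z = w z) →
      Tm.eval I v t = Tm.eval I w t := by
  intro t
  induction t using Tm.indOn with
  | hv y => intro v w h; simp [Tm.eval]; exact h y (by simp [Tm.varsT])
  | hf f ts ih =>
      intro v w h
      rw [Tm.eval_fn, Tm.eval_fn]
      congr 1
      refine List.map_congr_left fun t ht => ih t ht v w fun z hz => ?_
      exact h z (by rw [Tm.varsT_fn]; exact List.mem_flatMap.mpr ⟨t, ht, hz⟩)

theorem Tm.varsT_substT_sub (x : ℕ) (u : Tm) :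
    ∀ t : Tm, ∀ z ∈ (Tm.substT x u t).varsT, (z ∈ t.varsT ∧ z ≠ x) ∨ z ∈ u.varsT := by
  intro t
  induction t using Tm.indOn with
  | hv y =>
      intro z hz
      rw [Tm.substT] at hz
      by_cases h : y = x
      · simp [h] at hz; right; exact hz
      · simp [h, Tm.varsT] at hz; left; subst hz; exact ⟨by simp [Tm.varsT], h⟩
  | hf f ts ih =>
      intro z hz
      rw [Tm.substT_fn, Tm.varsT_fn] at hz
      rcases List.mem_flatMap.mp hz with ⟨t', ht', hz'⟩
      rcases List.mem_map.mp ht' with ⟨t, ht, rfl⟩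
      rcases ih t ht z hz' with ⟨h1, h2⟩ | h3
      · left
        exact ⟨by rw [Tm.varsT_fn]; exact List.mem_flatMap.mpr ⟨t, ht, h1⟩, h2⟩
      · right; exact h3

theorem Tm.symsT_substT_sub (x : ℕ) (u : Tm) :
    ∀ t : Tm, ∀ p ∈ (Tm.substT x u t).symsT, p ∈ t.symsT ∨ p ∈ u.symsT := by
  intro t
  induction t using Tm.indOn with
  | hv y =>
      intro p hp
      rw [Tm.substT] at hp
      by_cases h : y = x
      · simp [h] at hp; right; exact hp
      · simp [h, Tm.symsT] at hp
  | hf f ts ih =>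
      intro p hp
      rw [Tm.substT_fn, Tm.symsT_fn] at hp
      rcases List.mem_cons.mp hp with h | h
      · left; rw [Tm.symsT_fn]; simp at h ⊢; left; exact h
      · rcases List.mem_flatMap.mp h with ⟨t', ht', hp'⟩
        rcases List.mem_map.mp ht' with ⟨t, ht, rfl⟩
        rcases ih t ht p hp' with h1 | h2
        · left; rw [Tm.symsT_fn]
          exact List.mem_cons.mpr (Or.inr (List.mem_flatMap.mpr ⟨t, ht, h1⟩))
        · right; exact h2

end Aux
section Aux2

theorem Fm.qf_subst (x : ℕ) (u : Tm) :
    ∀ A : Fm, A.qf → (Fm.subst x u A).qf := by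
  intro A
  induction A with
  | atom p ts => intro _; rw [Fm.subst]; trivial
  | neg A ih => intro h; rw [Fm.subst]; exact ih h
  | or A B ihA ihB => intro h; rw [Fm.subst]; exact ⟨ihA h.1, ihB h.2⟩
  | and A B ihA ihB => intro h; rw [Fm.subst]; exact ⟨ihA h.1, ihB h.2⟩
  | all y A ih => intro h; exact absurd h (by rw [Fm.qf]; simp)
  | ex y A ih => intro h; exact absurd h (by rw [Fm.qf]; simp)

theorem Fm.holds_subst {D : Type} (I : Interp D) (x : ℕ) (u : Tm) :
    ∀ A : Fm, A.qf → ∀ v : ℕ → D,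
      (Fm.holds I v (Fm.subst x u A) ↔
        Fm.holds I (Function.update v x (Tm.eval I v u)) A) := by
  intro A
  induction A with
  | atom p ts =>
      intro _ v
      rw [Fm.subst, Fm.holds, Fm.holds, List.map_map]
      have he : Tm.eval I v ∘ Tm.substT x u
          = Tm.eval I (Function.update v x (Tm.eval I v u)) :=
        funext fun t => Tm.eval_substT I x u t v
      rw [he]
  | neg A ih =>
      intro h v
      rw [Fm.subst, Fm.holds, Fm.holds, ih h]
  | or A B ihA ihB =>
      intro h v
      rw [Fm.subst, Fm.holds, Fm.holds, ihA h.1, ihB h.2]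
  | and A B ihA ihB =>
      intro h v
      rw [Fm.subst, Fm.holds, Fm.holds, ihA h.1, ihB h.2]
  | all y A ih => intro h; exact absurd h (by rw [Fm.qf]; simp)
  | ex y A ih => intro h; exact absurd h (by rw [Fm.qf]; simp)

theorem Fm.freeVars_subst_sub (x : ℕ) (u : Tm) :
    ∀ A : Fm, A.qf → ∀ z ∈ (Fm.subst x u A).freeVars,
      (z ∈ A.freeVars ∧ z ≠ x) ∨ z ∈ u.varsT := by
  intro A
  induction A with
  | atom p ts =>
      intro _ z hz
      rw [Fm.subst, Fm.freeVars] at hz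
      rcases List.mem_flatMap.mp hz with ⟨t', ht', hz'⟩
      rcases List.mem_map.mp ht' with ⟨t, ht, rfl⟩
      rcases Tm.varsT_substT_sub x u t z hz' with ⟨h1, h2⟩ | h3
      · left; exact ⟨by rw [Fm.freeVars]; exact List.mem_flatMap.mpr ⟨t, ht, h1⟩, h2⟩
      · right; exact h3
  | neg A ih =>
      intro h z hz
      rw [Fm.subst, Fm.freeVars] at hz
      rw [Fm.freeVars]
      exact ih h z hz
  | or A B ihA ihB =>
      intro h z hz
      rw [Fm.subst, Fm.freeVars] at hz
      rw [Fm.freeVars]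
      rcases List.mem_append.mp hz with h1 | h1
      · rcases ihA h.1 z h1 with ⟨a, b⟩ | c
        · left; exact ⟨List.mem_append.mpr (Or.inl a), b⟩
        · right; exact c
      · rcases ihB h.2 z h1 with ⟨a, b⟩ | c
        · left; exact ⟨List.mem_append.mpr (Or.inr a), b⟩
        · right; exact c
  | and A B ihA ihB =>
      intro h z hz
      rw [Fm.subst, Fm.freeVars] at hz
      rw [Fm.freeVars]
      rcases List.mem_append.mp hz with h1 | h1
      · rcases ihA h.1 z h1 with ⟨a, b⟩ | c
        · left; exact ⟨List.mem_append.mpr (Or.inl a), b⟩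
        · right; exact c
      · rcases ihB h.2 z h1 with ⟨a, b⟩ | c
        · left; exact ⟨List.mem_append.mpr (Or.inr a), b⟩
        · right; exact c
  | all y A ih => intro h; exact absurd h (by rw [Fm.qf]; simp)
  | ex y A ih => intro h; exact absurd h (by rw [Fm.qf]; simp)

theorem Fm.symsF_subst_sub (x : ℕ) (u : Tm) :
    ∀ A : Fm, A.qf → ∀ p ∈ (Fm.subst x u A).symsF,
      p ∈ A.symsF ∨ p ∈ u.symsT := by
  intro A
  induction A with
  | atom q ts =>
      intro _ p hp
      rw [Fm.subst, Fm.symsF] at hp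
      rcases List.mem_flatMap.mp hp with ⟨t', ht', hp'⟩
      rcases List.mem_map.mp ht' with ⟨t, ht, rfl⟩
      rcases Tm.symsT_substT_sub x u t p hp' with h1 | h2
      · left; rw [Fm.symsF]; exact List.mem_flatMap.mpr ⟨t, ht, h1⟩
      · right; exact h2
  | neg A ih =>
      intro h p hp
      rw [Fm.subst, Fm.symsF] at hp
      rw [Fm.symsF]
      exact ih h p hp
  | or A B ihA ihB =>
      intro h p hp
      rw [Fm.subst, Fm.symsF] at hp
      rw [Fm.symsF]
      rcases List.mem_append.mp hp with h1 | h1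
      · rcases ihA h.1 p h1 with a | c
        · left; exact List.mem_append.mpr (Or.inl a)
        · right; exact c
      · rcases ihB h.2 p h1 with a | c
        · left; exact List.mem_append.mpr (Or.inr a)
        · right; exact c
  | and A B ihA ihB =>
      intro h p hp
      rw [Fm.subst, Fm.symsF] at hp
      rw [Fm.symsF]
      rcases List.mem_append.mp hp with h1 | h1
      · rcases ihA h.1 p h1 with a | c
        · left; exact List.mem_append.mpr (Or.inl a)
        · right; exact c
      · rcases ihB h.2 p h1 with a | c
        · left; exact List.mem_append.mpr (Or.inr a)
        · right; exact c
  | all y A ih => intro h; exact absurd h (by rw [Fm.qf]; simp)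
  | ex y A ih => intro h; exact absurd h (by rw [Fm.qf]; simp)

open Classical in
/-- For a quantifier-free formula, truth in a structure coincides with sentential
evaluation of the atoms via the structure. -/
theorem Fm.holds_iff_sentEval {D : Type} (I : Interp D) (v : ℕ → D) :
    ∀ A : Fm, A.qf →
      (Fm.holds I v A ↔
        Fm.sentEval (fun p ts => decide (I.prd p (ts.map (Tm.eval I v)))) A = true) := by
  intro A
  induction A with
  | atom p ts =>
      intro _
      rw [Fm.holds, Fm.sentEval]
      simp
  | neg A ih =>
      intro h
      rw [Fm.holds, Fm.sentEval, ih h]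
      simp
  | or A B ihA ihB =>
      intro h
      rw [Fm.holds, Fm.sentEval, ihA h.1, ihB h.2]
      simp
  | and A B ihA ihB =>
      intro h
      rw [Fm.holds, Fm.sentEval, ihA h.1, ihB h.2]
      simp
  | all y A ih => intro h; exact absurd h (by rw [Fm.qf]; simp)
  | ex y A ih => intro h; exact absurd h (by rw [Fm.qf]; simp)

end Aux2
section Aux3

theorem bigOr_qf : ∀ L : List Fm, L ≠ [] → (∀ A ∈ L, A.qf) → (bigOr L).qf := by
  intro L
  induction L with
  | nil => intro h; exact absurd rfl h
  | cons A rest ih =>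
      intro _ h
      cases rest with
      | nil => rw [bigOr]; exact h A (by simp)
      | cons B rest' =>
          rw [bigOr]
          exact ⟨h A (by simp), ih (by simp) fun C hC => h C (by simp [hC])⟩

theorem bigOr_sentEval_true (β : ℕ → List Tm → Bool) :
    ∀ L : List Fm, (bigOr L).sentEval β = true → ∃ A ∈ L, A.sentEval β = true := by
  intro L
  induction L with
  | nil => intro h; rw [bigOr] at h; simp [falsum, Fm.sentEval] at h
  | cons A rest ih =>
      intro h
      cases rest with
      | nil => exact ⟨A, by simp, h⟩
      | cons B rest' =>
          rw [bigOr, Fm.sentEval] at h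
          rcases Bool.or_eq_true_iff.mp h with h1 | h2
          · exact ⟨A, by simp, h1⟩
          · rcases ih h2 with ⟨C, hC, hC'⟩
            exact ⟨C, by simp [List.mem_cons.mp hC], hC'⟩

theorem bigOr_sentEval_false (β : ℕ → List Tm → Bool) :
    ∀ L : List Fm, (bigOr L).sentEval β = false → ∀ A ∈ L, A.sentEval β = false := by
  intro L
  induction L with
  | nil => intro _ A hA; exact absurd hA (by simp)
  | cons C rest ih =>
      intro h A hA
      cases rest with
      | nil =>
          have : A = C := by simpa using hA
          rw [this]; exact h
      | cons B rest' =>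
          rw [bigOr, Fm.sentEval] at h
          rcases Bool.or_eq_false_iff.mp h with ⟨h1, h2⟩
          rcases List.mem_cons.mp hA with rfl | h3
          · exact h1
          · exact ih h2 A h3

/-- Iterated update of an assignment. -/
def updL {D : Type} (v : ℕ → D) : List ℕ → List D → (ℕ → D)
  | [], _ => v
  | _, [] => v
  | x :: xs, d :: ds => updL (Function.update v x d) xs ds

theorem updL_update_comm {D : Type} (x : ℕ) (d : D) :
    ∀ (xs : List ℕ) (ds : List D) (v : ℕ → D), x ∉ xs →
      Function.update (updL v xs ds) x d = updL (Function.update v x d) xs ds := by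
  intro xs
  induction xs with
  | nil => intro ds v _; cases ds <;> rfl
  | cons y xs ih =>
      intro ds v hx
      cases ds with
      | nil => rfl
      | cons e ds =>
          rw [updL, updL, ih ds _ (fun h => hx (by simp [h])),
            Function.update_comm (fun h => hx (by simp [h.symm]))]

theorem Fm.substList_nil (ts : List Tm) (G : Fm) : Fm.substList [] ts G = G := by
  cases ts <;> rfl

theorem Fm.substList_nil₂ (xs : List ℕ) (G : Fm) : Fm.substList xs [] G = G := by
  cases xs <;> rfl

theorem Fm.substList_cons (x : ℕ) (xs : List ℕ) (t : Tm) (ts : List Tm) (G : Fm) :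
    Fm.substList (x :: xs) (t :: ts) G = Fm.substList xs ts (Fm.subst x t G) := rfl

theorem updL_nil {D : Type} (v : ℕ → D) (ds : List D) : updL v [] ds = v := by
  cases ds <;> rfl

theorem updL_nil₂ {D : Type} (v : ℕ → D) (xs : List ℕ) : updL v xs [] = v := by
  cases xs <;> rfl

theorem updL_cons {D : Type} (v : ℕ → D) (x : ℕ) (xs : List ℕ) (d : D) (ds : List D) :
    updL v (x :: xs) (d :: ds) = updL (Function.update v x d) xs ds := rfl

theorem Fm.qf_substList :
    ∀ (xs : List ℕ) (ts : List Tm) (G : Fm), G.qf → (Fm.substList xs ts G).qf := by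
  intro xs
  induction xs with
  | nil => intro ts G h; rw [Fm.substList]; exact h
  | cons x xs ih =>
      intro ts G h
      cases ts with
      | nil => rw [Fm.substList_nil₂]; exact h
      | cons t ts => rw [Fm.substList_cons]; exact ih ts _ (Fm.qf_subst x t G h)

theorem Fm.holds_substList {D : Type} (I : Interp D) :
    ∀ (xs : List ℕ) (ts : List Tm) (ds : List D) (G : Fm) (v : ℕ → D),
      G.qf → xs.Nodup → ts.length = xs.length → ds.length = xs.length →
      List.Forall₂ (fun (t : Tm) (d : D) => ∀ w : ℕ → D, Tm.eval I w t = d) ts ds →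
      (Fm.holds I v (Fm.substList xs ts G) ↔ Fm.holds I (updL v xs ds) G) := by
  intro xs
  induction xs with
  | nil =>
      intro ts ds G v hqf _ _ _ _
      rw [Fm.substList_nil, updL_nil]
  | cons x xs ih =>
      intro ts ds G v hqf hnd hlt hld hfa
      cases ts with
      | nil => simp at hlt
      | cons t ts =>
          cases ds with
          | nil => simp at hld
          | cons d ds =>
              have hfa1 := (List.forall₂_cons.mp hfa).1
              have hfa2 := (List.forall₂_cons.mp hfa).2
              rw [Fm.substList_cons, updL_cons,
                ih ts ds (Fm.subst x t G) v (Fm.qf_subst x t G hqf)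
                  (List.nodup_cons.mp hnd).2 (by simpa using hlt) (by simpa using hld) hfa2,
                Fm.holds_subst I x t G hqf, hfa1,
                updL_update_comm x d xs ds v (List.nodup_cons.mp hnd).1]

theorem bigEx_elim {D : Type} (I : Interp D) (G : Fm) :
    ∀ (xs : List ℕ) (v : ℕ → D), Fm.holds I v (bigEx xs G) →
      ∃ ds : List D, ds.length = xs.length ∧ Fm.holds I (updL v xs ds) G := by
  intro xs
  induction xs with
  | nil => intro v h; exact ⟨[], rfl, h⟩
  | cons x xs ih =>
      intro v h
      rw [bigEx, Fm.holds] at h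
      rcases h with ⟨d, hd⟩
      rcases ih (Function.update v x d) hd with ⟨ds, h1, h2⟩
      exact ⟨d :: ds, by simp [h1], by rw [updL]; exact h2⟩

theorem bigEx_intro {D : Type} (I : Interp D) (G : Fm) :
    ∀ (xs : List ℕ) (ds : List D) (v : ℕ → D), ds.length = xs.length →
      Fm.holds I (updL v xs ds) G → Fm.holds I v (bigEx xs G) := by
  intro xs
  induction xs with
  | nil => intro ds v _ h; rw [updL_nil] at h; exact h
  | cons x xs ih =>
      intro ds v hl h
      cases ds with
      | nil => simp at hl
      | cons d ds =>
          rw [bigEx, Fm.holds]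
          exact ⟨d, ih ds _ (by simpa using hl) (by rw [updL] at h; exact h)⟩

theorem Fm.freeVars_substList :
    ∀ (xs : List ℕ) (ts : List Tm) (G : Fm), G.qf → (∀ t ∈ ts, Tm.varsT t = []) →
      ts.length = xs.length →
      ∀ z ∈ (Fm.substList xs ts G).freeVars, z ∈ G.freeVars ∧ z ∉ xs := by
  intro xs
  induction xs with
  | nil =>
      intro ts G hqf _ _ z hz
      rw [Fm.substList_nil] at hz
      exact ⟨hz, by simp⟩
  | cons x xs ih =>
      intro ts G hqf hcl hl z hz
      cases ts with
      | nil => simp at hl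
      | cons t ts =>
          rw [Fm.substList_cons] at hz
          rcases ih ts (Fm.subst x t G) (Fm.qf_subst x t G hqf)
              (fun u hu => hcl u (by simp [hu])) (by simpa using hl) z hz with ⟨h1, h2⟩
          rcases Fm.freeVars_subst_sub x t G hqf z h1 with ⟨h3, h4⟩ | h5
          · exact ⟨h3, by simp [h4, h2]⟩
          · rw [hcl t (by simp)] at h5; exact absurd h5 (by simp)

theorem Fm.symsF_substList :
    ∀ (xs : List ℕ) (ts : List Tm) (G : Fm), G.qf →
      ∀ p ∈ (Fm.substList xs ts G).symsF, p ∈ G.symsF ∨ ∃ t ∈ ts, p ∈ t.symsT := by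
  intro xs
  induction xs with
  | nil =>
      intro ts G hqf p hp
      rw [Fm.substList_nil] at hp
      exact Or.inl hp
  | cons x xs ih =>
      intro ts G hqf p hp
      cases ts with
      | nil => rw [Fm.substList_nil₂] at hp; exact Or.inl hp
      | cons t ts =>
          rw [Fm.substList_cons] at hp
          rcases ih ts (Fm.subst x t G) (Fm.qf_subst x t G hqf) p hp with h1 | ⟨u, hu, hp'⟩
          · rcases Fm.symsF_subst_sub x t G hqf p h1 with h2 | h3
            · exact Or.inl h2
            · exact Or.inr ⟨t, by simp, h3⟩
          · exact Or.inr ⟨u, by simp [hu], hp'⟩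

end Aux3
section Herb

/-- The default constant. -/
def c0 : Tm := .fn (some (Sum.inl 0)) []

theorem c0_closed : c0.varsT = [] := by rw [c0, Tm.varsT_fn]; simp

theorem c0_base : c0.isBaseT := by
  intro p hp
  rw [c0, Tm.symsT_fn] at hp
  simp at hp
  subst hp
  exact ⟨0, rfl⟩

/-- Closed base terms: the domain of the Herbrand structure. -/
def GTm : Type := {t : Tm // t.varsT = [] ∧ t.isBaseT}

def c0g : GTm := ⟨c0, c0_closed, c0_base⟩

open Classical in
/-- The Herbrand structure determined by a Boolean valuation of atoms. -/
noncomputable def HI (β : ℕ → List Tm → Bool) : Interp GTm where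
  fns f ds :=
    if h : ∃ k : ℕ, f = some (Sum.inl k) then
      ⟨.fn f (ds.map Subtype.val), by
        constructor
        · rw [Tm.varsT_fn, List.flatMap_eq_nil_iff]
          intro t ht
          rcases List.mem_map.mp ht with ⟨d, _, rfl⟩
          exact d.2.1
        · intro p hp
          rw [Tm.symsT_fn] at hp
          rcases List.mem_cons.mp hp with rfl | hp'
          · rcases h with ⟨k, hk⟩; exact ⟨k, hk⟩
          · rcases List.mem_flatMap.mp hp' with ⟨t, ht, hpt⟩
            rcases List.mem_map.mp ht with ⟨d, _, rfl⟩
            exact d.2.2 p hpt⟩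
    else c0g
  prd p ds := β p (ds.map Subtype.val) = true

theorem herb_eval (β : ℕ → List Tm → Bool) :
    ∀ t : Tm, ∀ v : ℕ → GTm, t.varsT = [] → t.isBaseT →
      (Tm.eval (HI β) v t).val = t := by
  intro t
  induction t using Tm.indOn with
  | hv y => intro v hcl _; rw [Tm.varsT] at hcl; simp at hcl
  | hf f ts ih =>
      intro v hcl hb
      rw [Tm.varsT_fn, List.flatMap_eq_nil_iff] at hcl
      have hf' : ∃ k : ℕ, f = some (Sum.inl k) := by
        rcases hb (f, ts.length) (by rw [Tm.symsT_fn]; simp) with ⟨k, hk⟩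
        exact ⟨k, hk⟩
      rw [Tm.eval_fn]
      show ((HI β).fns f (ts.map (Tm.eval (HI β) v))).val = Tm.fn f ts
      rw [HI]
      simp only [dif_pos hf']
      erw [dif_pos hf']
      show Tm.fn f ((ts.map (Tm.eval (HI β) v)).map Subtype.val) = Tm.fn f ts
      erw [List.map_map]
      congr 1
      conv_rhs => rw [← List.map_id ts]
      refine List.map_congr_left fun t ht => ?_
      refine ih t ht v (hcl t ht) ?_
      intro q hq
      refine hb q ?_
      rw [Tm.symsT_fn]
      exact List.mem_cons.mpr (Or.inr (List.mem_flatMap.mpr ⟨t, ht, hq⟩))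

theorem herb_holds (β : ℕ → List Tm → Bool) :
    ∀ A : Fm, A.qf → (∀ z, z ∉ A.freeVars) → A.isBase → ∀ v : ℕ → GTm,
      (Fm.holds (HI β) v A ↔ A.sentEval β = true) := by
  intro A
  induction A with
  | atom p ts =>
      intro _ hfv hb v
      rw [Fm.holds, Fm.sentEval]
      show β p ((ts.map (Tm.eval (HI β) v)).map Subtype.val) = true ↔ _
      erw [List.map_map]
      have : ts.map (Subtype.val ∘ Tm.eval (HI β) v) = ts := by
        conv_rhs => rw [← List.map_id ts]
        refine List.map_congr_left fun t ht => ?_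
        refine herb_eval β t v ?_ ?_
        · rw [List.eq_nil_iff_forall_not_mem]
          intro z hz
          exact hfv z (by rw [Fm.freeVars]; exact List.mem_flatMap.mpr ⟨t, ht, hz⟩)
        · intro q hq
          exact hb q (by rw [Fm.symsF]; exact List.mem_flatMap.mpr ⟨t, ht, hq⟩)
      erw [this]
  | neg A ih =>
      intro hqf hfv hb v
      rw [Fm.holds, Fm.sentEval,
        ih hqf (fun z hz => hfv z (by rw [Fm.freeVars]; exact hz))
          (fun q hq => hb q (by rw [Fm.symsF]; exact hq)) v]
      simp
  | or A B ihA ihB =>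
      intro hqf hfv hb v
      rw [Fm.holds, Fm.sentEval,
        ihA hqf.1 (fun z hz => hfv z (by rw [Fm.freeVars]; exact List.mem_append.mpr (Or.inl hz)))
          (fun q hq => hb q (by rw [Fm.symsF]; exact List.mem_append.mpr (Or.inl hq))) v,
        ihB hqf.2 (fun z hz => hfv z (by rw [Fm.freeVars]; exact List.mem_append.mpr (Or.inr hz)))
          (fun q hq => hb q (by rw [Fm.symsF]; exact List.mem_append.mpr (Or.inr hq))) v]
      simp
  | and A B ihA ihB =>
      intro hqf hfv hb v
      rw [Fm.holds, Fm.sentEval,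
        ihA hqf.1 (fun z hz => hfv z (by rw [Fm.freeVars]; exact List.mem_append.mpr (Or.inl hz)))
          (fun q hq => hb q (by rw [Fm.symsF]; exact List.mem_append.mpr (Or.inl hq))) v,
        ihB hqf.2 (fun z hz => hfv z (by rw [Fm.freeVars]; exact List.mem_append.mpr (Or.inr hz)))
          (fun q hq => hb q (by rw [Fm.symsF]; exact List.mem_append.mpr (Or.inr hq))) v]
      simp
  | all y A ih => intro h; exact absurd h (by rw [Fm.qf]; simp)
  | ex y A ih => intro h; exact absurd h (by rw [Fm.qf]; simp)

theorem sentEval_continuous (A : Fm) :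
    Continuous (fun β : ℕ → List Tm → Bool => A.sentEval β) := by
  induction A with
  | atom p ts =>
      have : (fun β : ℕ → List Tm → Bool => Fm.sentEval β (.atom p ts))
          = fun β => β p ts := by funext β; rw [Fm.sentEval]
      rw [this]
      exact (continuous_apply ts).comp (continuous_apply p)
  | neg A ih =>
      have : (fun β : ℕ → List Tm → Bool => Fm.sentEval β (.neg A))
          = (fun b => !b) ∘ (fun β => Fm.sentEval β A) := by
        funext β; rw [Function.comp_apply, Fm.sentEval]
      rw [this]
      exact continuous_of_discreteTopology.comp ih
  | or A B ihA ihB =>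
      have : (fun β : ℕ → List Tm → Bool => Fm.sentEval β (.or A B))
          = (fun q : Bool × Bool => q.1 || q.2)
            ∘ (fun β => (Fm.sentEval β A, Fm.sentEval β B)) := by
        funext β; rw [Function.comp_apply, Fm.sentEval]
      rw [this]
      exact continuous_of_discreteTopology.comp (ihA.prodMk ihB)
  | and A B ihA ihB =>
      have : (fun β : ℕ → List Tm → Bool => Fm.sentEval β (.and A B))
          = (fun q : Bool × Bool => q.1 && q.2)
            ∘ (fun β => (Fm.sentEval β A, Fm.sentEval β B)) := by
        funext β; rw [Function.comp_apply, Fm.sentEval]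
      rw [this]
      exact continuous_of_discreteTopology.comp (ihA.prodMk ihB)
  | all y A ih =>
      have : (fun β : ℕ → List Tm → Bool => Fm.sentEval β (.all y A))
          = fun _ => false := by funext β; rw [Fm.sentEval]
      rw [this]; exact continuous_const
  | ex y A ih =>
      have : (fun β : ℕ → List Tm → Bool => Fm.sentEval β (.ex y A))
          = fun _ => false := by funext β; rw [Fm.sentEval]
      rw [this]; exact continuous_const

end Herb

theorem forall₂_eval_map_val (β : ℕ → List Tm → Bool) :
    ∀ ds : List GTm, List.Forall₂ (fun (t : Tm) (d : GTm) =>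
      ∀ w : ℕ → GTm, Tm.eval (HI β) w t = d) (ds.map Subtype.val) ds := by
  intro ds
  induction ds with
  | nil => exact List.Forall₂.nil
  | cons d ds ih =>
      erw [List.map_cons, List.forall₂_cons]
      exact ⟨fun w => Subtype.ext (herb_eval β d.val w d.2.1 d.2.2), ih⟩

theorem forall₂_eval_closed {D : Type} (I : Interp D) (v : ℕ → D) :
    ∀ tp : List Tm, (∀ t ∈ tp, Tm.varsT t = []) →
      List.Forall₂ (fun (t : Tm) (d : D) => ∀ w : ℕ → D, Tm.eval I w t = d)
        tp (tp.map (Tm.eval I v)) := by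
  intro tp
  induction tp with
  | nil => simp
  | cons t ts ih =>
      intro hcl
      rw [List.map_cons, List.forall₂_cons]
      refine ⟨fun w => Tm.eval_indep I t w v fun z hz => ?_, ih fun u hu => hcl u (by simp [hu])⟩
      rw [hcl t (by simp)] at hz
      exact absurd hz (by simp)

/-- **Herbrand's theorem for prenex existential formulas.**
For a quantifier-free `G` with free variables among the distinct `x₁,…,x_k`
(over the base language, in which variable-free terms exist), the formula
`∃x₁.…∃x_k.G` is valid iff there are finitely many `k`-tuples of variable-free
terms such that the disjunction of the corresponding instances of `G` is
sententially valid. -/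
theorem herbrand_prenex_existential (G : Fm) (xs : List ℕ)
    (hqf : G.qf) (hnd : xs.Nodup) (hfv : ∀ z ∈ G.freeVars, z ∈ xs)
    (hbase : G.isBase) :
    (bigEx xs G).valid ↔
      ∃ subs : List (List Tm), subs ≠ [] ∧
        (∀ tup ∈ subs, tup.length = xs.length ∧
          ∀ t ∈ tup, Tm.varsT t = [] ∧ t.isBaseT) ∧
        (bigOr (subs.map fun tup => Fm.substList xs tup G)).taut := by
  classical
  constructor
  · -- validity implies the Herbrand disjunction property
    intro hval
    by_contra hR
    set tupOK : List Tm → Prop := fun tp =>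
      tp.length = xs.length ∧ ∀ t ∈ tp, Tm.varsT t = [] ∧ t.isBaseT with htupOK
    set Z : List Tm → Set (ℕ → List Tm → Bool) := fun tp =>
      {β | tupOK tp → (Fm.substList xs tp G).sentEval β = false} with hZ
    have hZclosed : ∀ tp, IsClosed (Z tp) := by
      intro tp
      by_cases h : tupOK tp
      · have he : Z tp = (fun β => (Fm.substList xs tp G).sentEval β) ⁻¹' {false} := by
          ext β
          simp only [hZ, Set.mem_setOf_eq, Set.mem_preimage, Set.mem_singleton_iff]
          exact imp_iff_right h
        rw [he]
        exact IsClosed.preimage (sentEval_continuous _) (isClosed_discrete _)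
      · have he : Z tp = Set.univ := by
          ext β; simp [hZ, h]
        rw [he]; exact isClosed_univ
    have hfin : ∀ u : Finset (List Tm), (Set.univ ∩ ⋂ tp ∈ u, Z tp).Nonempty := by
      intro u
      set dflt : List Tm := xs.map fun _ => c0 with hdflt
      have hdOK : tupOK dflt := by
        constructor
        · simp [hdflt]
        · intro t ht
          rcases List.mem_map.mp ht with ⟨_, _, rfl⟩
          exact ⟨c0_closed, c0_base⟩
      set subs : List (List Tm) := dflt :: u.toList.filter (fun tp => decide (tupOK tp))
        with hsubs
      have hsub : ∀ tp ∈ subs, tupOK tp := by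
        intro tp htp
        rcases List.mem_cons.mp htp with rfl | h2
        · exact hdOK
        · exact of_decide_eq_true (List.mem_filter.mp h2).2
      have hnt : ¬ (bigOr (subs.map fun tup => Fm.substList xs tup G)).taut := by
        intro ht
        exact hR ⟨subs, by simp [hsubs], hsub, ht⟩
      have hqfOr : (bigOr (subs.map fun tup => Fm.substList xs tup G)).qf := by
        refine bigOr_qf _ (by simp [hsubs]) ?_
        intro A hA
        rcases List.mem_map.mp hA with ⟨tp, _, rfl⟩
        exact Fm.qf_substList xs tp G hqf
      have hβex : ∃ β, (bigOr (subs.map fun tup => Fm.substList xs tup G)).sentEval β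
          = false := by
        by_contra h'
        push_neg at h'
        exact hnt ⟨hqfOr, fun β => by
          cases hb : (bigOr (subs.map fun tup => Fm.substList xs tup G)).sentEval β
          · exact absurd hb (h' β)
          · rfl⟩
      rcases hβex with ⟨β, hβ⟩
      refine ⟨β, Set.mem_inter (Set.mem_univ β) ?_⟩
      rw [Set.mem_iInter₂]
      intro tp htp hOK
      refine bigOr_sentEval_false β _ hβ _ ?_
      refine List.mem_map.mpr ⟨tp, ?_, rfl⟩
      exact List.mem_cons.mpr (Or.inr (List.mem_filter.mpr
        ⟨Finset.mem_toList.mpr htp, decide_eq_true hOK⟩))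
    have hNE : (⋂ tp, Z tp).Nonempty := by
      by_contra h
      rw [Set.not_nonempty_iff_eq_empty] at h
      rcases IsCompact.elim_finite_subfamily_closed isCompact_univ Z hZclosed
        (by rw [h]; simp) with ⟨u, hu⟩
      rcases hfin u with ⟨β, hβ⟩
      rw [hu] at hβ
      exact hβ
    rcases hNE with ⟨β, hβ⟩
    have hβall : ∀ tp, β ∈ Z tp := Set.mem_iInter.mp hβ
    -- evaluate validity in the Herbrand structure
    have hv := hval GTm ⟨c0g⟩ (HI β) (fun _ => c0g)
    rcases bigEx_elim (HI β) G xs (fun _ => c0g) hv with ⟨ds, hlen, hh⟩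
    set tp : List Tm := ds.map Subtype.val with htp
    have htpcl : ∀ t ∈ tp, Tm.varsT t = [] ∧ t.isBaseT := by
      intro t ht
      rcases List.mem_map.mp ht with ⟨d, _, rfl⟩
      exact d.2
    have htplen : tp.length = xs.length := by erw [htp, List.length_map, hlen]
    have hfa : List.Forall₂ (fun (t : Tm) (d : GTm) =>
        ∀ w : ℕ → GTm, Tm.eval (HI β) w t = d) tp ds := forall₂_eval_map_val β ds
    have hholds : Fm.holds (HI β) (fun _ => c0g) (Fm.substList xs tp G) :=
      (Fm.holds_substList (HI β) xs tp ds G (fun _ => c0g) hqf hnd htplen hlen hfa).mpr hh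
    have hfvI : ∀ z, z ∉ (Fm.substList xs tp G).freeVars := by
      intro z hz
      rcases Fm.freeVars_substList xs tp G hqf (fun t ht => (htpcl t ht).1) htplen z hz
        with ⟨h1, h2⟩
      exact h2 (hfv z h1)
    have hbI : (Fm.substList xs tp G).isBase := by
      intro p hp
      rcases Fm.symsF_substList xs tp G hqf p hp with h | ⟨t, ht, hp'⟩
      · exact hbase p h
      · exact (htpcl t ht).2 p hp'
    have hse : (Fm.substList xs tp G).sentEval β = true :=
      (herb_holds β _ (Fm.qf_substList xs tp G hqf) hfvI hbI _).mp hholds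
    have hse' : (Fm.substList xs tp G).sentEval β = false :=
      hβall tp ⟨htplen, htpcl⟩
    rw [hse] at hse'
    simp at hse'
  · -- the Herbrand disjunction property implies validity
    rintro ⟨subs, hne, hts, hqfOr, htaut⟩
    intro D hD I v
    set β : ℕ → List Tm → Bool :=
      fun p ts' => decide (I.prd p (ts'.map (Tm.eval I v))) with hβdef
    rcases bigOr_sentEval_true β _ (htaut β) with ⟨A, hA, hAtrue⟩
    rcases List.mem_map.mp hA with ⟨tp, htp, rfl⟩
    have hq := Fm.qf_substList xs tp G hqf
    have hh : Fm.holds I v (Fm.substList xs tp G) :=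
      (Fm.holds_iff_sentEval I v _ hq).mpr hAtrue
    obtain ⟨hlenOK, hclosed⟩ := hts tp htp
    set ds : List D := tp.map (Tm.eval I v) with hds
    have hfa : List.Forall₂ (fun (t : Tm) (d : D) =>
        ∀ w : ℕ → D, Tm.eval I w t = d) tp ds :=
      forall₂_eval_closed I v tp fun t ht => (hclosed t ht).1
    have hdslen : ds.length = xs.length := by simp [hds, hlenOK]
    exact bigEx_intro I G xs ds v hdslen
      ((Fm.holds_substList I xs tp ds G v hqf hnd hlenOK hdslen hfa).mp hh)

end Herbrand
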